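/- Let f₁(y) = e^y and f₂(y) = e^y + e^{2y}, and denote by g^{(1)}_P, ∇^kR^{(1)}_P and g^{(2)}_P, ∇^kR^{(2)}_P the tensors associated to f₁ and f₂ respectively. Then for every pair of points P, Q ∈ ℝ^m there exists a linear isomorphism φ : ℝ^m → ℝ^m such that g^{(1)}_Q(φu, φv) = g^{(2)}_P(u, v) for all u, v ∈ ℝ^m and ∇^kR^{(1)}_Q(φξ₁, …, φξ_{4+k}) = ∇^kR^{(2)}_P(ξ₁, …, ξ_{4+k}) for all 0 ≤ k ≤ p+2 and all arguments. That is, M²_{2p+6} = M_{2p+6, e^y+e^{2y}} is (p+2)-modeled on M¹_{2p+6} = M_{2p+6, e^y}. -/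

import Mathlib

/- Setting of Gilkey–Nikčević: m = 2p+6, coordinates
   (x, y, z_0, …, z_p, x̄, ȳ, z̄_0, …, z̄_p) on ℝ^m. -/

/-- The model space ℝ^{2p+6}. -/
abbrev Vp (p : ℕ) := Fin (2*p+6) → ℝ

/-- index of the coordinate x -/
def ix (p : ℕ) : Fin (2*p+6) := ⟨0, by omega⟩
/-- index of the coordinate y -/
def iy (p : ℕ) : Fin (2*p+6) := ⟨1, by omega⟩
/-- index of the coordinate z_i -/
def iz (p : ℕ) (i : Fin (p+1)) : Fin (2*p+6) := ⟨2 + i.1, by have := i.2; omega⟩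
/-- index of the coordinate x̄ -/
def ixb (p : ℕ) : Fin (2*p+6) := ⟨p+3, by omega⟩
/-- index of the coordinate ȳ -/
def iyb (p : ℕ) : Fin (2*p+6) := ⟨p+4, by omega⟩
/-- index of the coordinate z̄_i -/
def izb (p : ℕ) (i : Fin (p+1)) : Fin (2*p+6) := ⟨p+5+i.1, by have := i.2; omega⟩

/-- F(y, z⃗) = f(y) + Σ_{i=0}^p y^{i+1} z_i, evaluated at the coordinates of the point P. -/
noncomputable def FF (p : ℕ) (f : ℝ → ℝ) (P : Vp p) : ℝ :=
  f (P (iy p)) + ∑ i : Fin (p+1), (P (iy p))^(i.1+1) * P (iz p i)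

/-- The symmetric bilinear form g_P on ℝ^{2p+6}: the only nonzero components on
basis vectors are g(∂x,∂x̄)=g(∂y,∂ȳ)=g(∂z_i,∂z̄_i)=1 and g(∂x,∂x) = -2F(y,z⃗). -/
noncomputable def gP (p : ℕ) (f : ℝ → ℝ) (P : Vp p) (u v : Vp p) : ℝ :=
  u (ix p) * v (ixb p) + u (ixb p) * v (ix p)
  + u (iy p) * v (iyb p) + u (iyb p) * v (iy p)
  + ∑ i : Fin (p+1), (u (iz p i) * v (izb p i) + u (izb p i) * v (iz p i))
  - 2 * FF p f P * (u (ix p) * v (ix p))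

/-- wedge component: (u ∧ v)_{ab} = u_a v_b - u_b v_a. -/
def wdg (p : ℕ) (a b : Fin (2*p+6)) (u v : Vp p) : ℝ := u a * v b - u b * v a

/-- The (4+k)-linear form ∇^kR_P on ℝ^{2p+6}: it is antisymmetric in arguments 1,2 and
in arguments 3,4, symmetric under interchanging the pair (1,2) with the pair (3,4),
and its only nonzero components on basis vectors up to these symmetries are
∇^kR_P(∂x,∂y,∂y,∂x;∂y,…,∂y) = f^{(k+2)}(y) + Σ_i (d/dy)^{k+2}(y^{i+1})·z_i,
∇^kR_P(∂x,∂y,∂z_i,∂x;∂y,…,∂y) = (d/dy)^{k+1}(y^{i+1}), and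
∇^kR_P(∂x,∂y,∂y,∂x;∂y,…,∂z_i,…,∂y) = (d/dy)^{k+1}(y^{i+1}) (∂z_i in one derivative slot).
This `def` is the unique multilinear map with these components, written out explicitly. -/
noncomputable def nR (p : ℕ) (f : ℝ → ℝ) (k : ℕ) (P : Vp p)
    (ξ₁ ξ₂ ξ₃ ξ₄ : Vp p) (η : Fin k → Vp p) : ℝ :=
  -(wdg p (ix p) (iy p) ξ₁ ξ₂ * wdg p (ix p) (iy p) ξ₃ ξ₄) *
    ((iteratedDeriv (k+2) f (P (iy p))
        + ∑ i : Fin (p+1), iteratedDeriv (k+2) (fun t => t^(i.1+1)) (P (iy p)) * P (iz p i))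
        * ∏ j : Fin k, η j (iy p)
      + ∑ i : Fin (p+1), iteratedDeriv (k+1) (fun t => t^(i.1+1)) (P (iy p)) *
          ∑ j : Fin k, η j (iz p i) * ∏ l ∈ Finset.univ.erase j, η l (iy p))
  - (∑ i : Fin (p+1), iteratedDeriv (k+1) (fun t => t^(i.1+1)) (P (iy p)) *
      (wdg p (ix p) (iy p) ξ₁ ξ₂ * wdg p (ix p) (iz p i) ξ₃ ξ₄
        + wdg p (ix p) (iz p i) ξ₁ ξ₂ * wdg p (ix p) (iy p) ξ₃ ξ₄)) * ∏ j : Fin k, η j (iy p)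

namespace GN

open Finset Matrix

lemma iterPow (n : ℕ) : ∀ m : ℕ, iteratedDeriv m (fun x : ℝ => x^n)
    = fun x => (n.descFactorial m : ℝ) * x^(n-m)
  | 0 => by funext x; simp
  | (m+1) => by
      rw [iteratedDeriv_succ, iterPow n m]
      funext x
      rw [deriv_const_mul _ (differentiableAt_pow _), deriv_pow_field]
      rw [Nat.descFactorial_succ, Nat.cast_mul,
        show n - m - 1 = n - (m+1) from by omega]
      ring

lemma iterExp (m : ℕ) : iteratedDeriv m Real.exp = Real.exp := by
  rw [iteratedDeriv_eq_iterate, Real.iter_deriv_exp]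

lemma iterF2 : ∀ m : ℕ, iteratedDeriv m (fun y : ℝ => Real.exp y + Real.exp (2*y))
    = fun y => Real.exp y + 2^m * Real.exp (2*y)
  | 0 => by funext x; simp
  | (m+1) => by
      rw [iteratedDeriv_succ, iterF2 m]
      funext x
      have h2 : HasDerivAt (fun y : ℝ => 2*y) 2 x := by
        simpa using (hasDerivAt_id x).const_mul (2:ℝ)
      have h3 : HasDerivAt (fun y : ℝ => Real.exp (2*y)) (Real.exp (2*x) * 2) x :=
        (Real.hasDerivAt_exp (2*x)).comp x h2
      have h := (Real.hasDerivAt_exp x).add (HasDerivAt.const_mul ((2:ℝ)^m) h3)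
      rw [(show HasDerivAt (fun y : ℝ => Real.exp y + 2^m * Real.exp (2*y)) _ x from h).deriv]
      ring

noncomputable section

variable (p : ℕ)

/-- scaling factor t -/
def tt (P : Vp p) : ℝ :=
  (Real.exp (P (iy p)) + 2^(p+4) * Real.exp (2*P (iy p))) /
  (Real.exp (P (iy p)) + 2^(p+3) * Real.exp (2*P (iy p)))

lemma den_pos (P : Vp p) : 0 < Real.exp (P (iy p)) + 2^(p+3) * Real.exp (2*P (iy p)) := by
  positivity

lemma tt_pos (P : Vp p) : 0 < tt p P :=
  div_pos (by positivity) (den_pos p P)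

lemma tt_ne (P : Vp p) : tt p P ≠ 0 := (tt_pos p P).ne'

/-- scaling factor s² -/
def ss2 (P Q : Vp p) : ℝ :=
  (Real.exp (P (iy p)) + 2^(p+3) * Real.exp (2*P (iy p))) /
  ((tt p P)^(p+3) * Real.exp (Q (iy p)))

lemma ss2_pos (P Q : Vp p) : 0 < ss2 p P Q :=
  div_pos (den_pos p P) (mul_pos (pow_pos (tt_pos p P) _) (Real.exp_pos _))

lemma ss2_ne (P Q : Vp p) : ss2 p P Q ≠ 0 := (ss2_pos p P Q).ne'

def ss (P Q : Vp p) : ℝ := Real.sqrt (ss2 p P Q)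

lemma ss_pos (P Q : Vp p) : 0 < ss p P Q := Real.sqrt_pos.mpr (ss2_pos p P Q)

lemma ss_ne (P Q : Vp p) : ss p P Q ≠ 0 := (ss_pos p P Q).ne'

lemma ss_sq (P Q : Vp p) : ss p P Q * ss p P Q = ss2 p P Q :=
  Real.mul_self_sqrt (ss2_pos p P Q).le

lemma keyA (P Q : Vp p) : ss2 p P Q * (tt p P)^(p+3) * Real.exp (Q (iy p))
    = Real.exp (P (iy p)) + 2^(p+3) * Real.exp (2*P (iy p)) := by
  rw [ss2]
  rw [div_mul_eq_mul_div, div_mul_eq_mul_div,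
    div_eq_iff (by have := tt_pos p P; positivity)]
  ring

lemma keyT (P : Vp p) :
    (Real.exp (P (iy p)) + 2^(p+3) * Real.exp (2*P (iy p))) * tt p P
    = Real.exp (P (iy p)) + 2^(p+4) * Real.exp (2*P (iy p)) := by
  rw [tt]
  field_simp [(den_pos p P).ne']

lemma keyB (P Q : Vp p) : ss2 p P Q * (tt p P)^(p+4) * Real.exp (Q (iy p))
    = Real.exp (P (iy p)) + 2^(p+4) * Real.exp (2*P (iy p)) := by
  have : (tt p P)^(p+4) = (tt p P)^(p+3) * tt p P := by ring
  rw [this, ← keyT p P, ← keyA p P Q]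
  ring

/-- the matrix of derivatives of the powers at Q -/
def Bmat (Q : Vp p) : Matrix (Fin (p+1)) (Fin (p+1)) ℝ :=
  fun k i => iteratedDeriv (k.1+1) (fun t => t^(i.1+1)) (Q (iy p))

lemma Bmat_apply (Q : Vp p) (k i : Fin (p+1)) :
    Bmat p Q k i = ((i.1+1).descFactorial (k.1+1) : ℝ) * (Q (iy p))^(i.1-k.1) := by
  rw [Bmat, iterPow]
  simp [Nat.succ_sub_succ]

lemma Bmat_tri (Q : Vp p) : (Bmat p Q).BlockTriangular id := by
  intro k i h
  rw [Bmat_apply, Nat.descFactorial_of_lt (by simpa using h)]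
  simp

lemma Bmat_det (Q : Vp p) : IsUnit (Bmat p Q).det := by
  rw [Matrix.det_of_upperTriangular (Bmat_tri p Q)]
  rw [isUnit_iff_ne_zero]
  refine Finset.prod_ne_zero_iff.mpr fun k _ => ?_
  rw [Bmat_apply, Nat.sub_self, pow_zero, mul_one, Nat.descFactorial_self]
  exact_mod_cast (Nat.factorial_ne_zero _)

/-- target matrix -/
def Dmat (P Q : Vp p) : Matrix (Fin (p+1)) (Fin (p+1)) ℝ :=
  fun k l => (ss2 p P Q)⁻¹ * ((tt p P)⁻¹)^(k.1+1) *
    iteratedDeriv (k.1+1) (fun t => t^(l.1+1)) (P (iy p))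

lemma Dmat_tri (P Q : Vp p) : (Dmat p P Q).BlockTriangular id := by
  intro k l h
  rw [Dmat, iterPow]
  simp only [Nat.descFactorial_of_lt (show l.1+1 < k.1+1 by simpa using h)]
  simp

lemma Dmat_det (P Q : Vp p) : IsUnit (Dmat p P Q).det := by
  rw [Matrix.det_of_upperTriangular (Dmat_tri p P Q)]
  rw [isUnit_iff_ne_zero]
  refine Finset.prod_ne_zero_iff.mpr fun k _ => ?_
  rw [Dmat, iterPow]
  simp only [Nat.sub_self, Nat.succ_sub_succ, pow_zero, mul_one, Nat.descFactorial_self]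
  have h1 := ss2_ne p P Q
  have h2 := tt_ne p P
  have h3 : ((k.1+1).factorial : ℝ) ≠ 0 := by exact_mod_cast (Nat.factorial_ne_zero _)
  positivity

def Mmat (P Q : Vp p) : Matrix (Fin (p+1)) (Fin (p+1)) ℝ := (Bmat p Q)⁻¹ * Dmat p P Q

lemma BM (P Q : Vp p) : Bmat p Q * Mmat p P Q = Dmat p P Q :=
  Matrix.mul_nonsing_inv_cancel_left _ _ (Bmat_det p Q)

lemma Mmat_det (P Q : Vp p) : IsUnit (Mmat p P Q).det := by
  rw [Mmat, Matrix.det_mul]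
  exact (isUnit_nonsing_inv_det _ (Bmat_det p Q)).mul (Dmat_det p P Q)

/-- R2: transformation rule for the B coefficients -/
lemma R2' (P Q : Vp p) (k : ℕ) (hk : k ≤ p+2) (l : Fin (p+1)) :
    iteratedDeriv (k+1) (fun t => t^(l.1+1)) (P (iy p))
      = ss2 p P Q * (tt p P)^(k+1) *
        ∑ i, iteratedDeriv (k+1) (fun t => t^(i.1+1)) (Q (iy p)) * Mmat p P Q i l := by
  by_cases hkp : k ≤ p
  · have hsum : ∑ i, iteratedDeriv (k+1) (fun t => t^(i.1+1)) (Q (iy p)) * Mmat p P Q i l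
        = Dmat p P Q ⟨k, by omega⟩ l := by
      rw [← BM p P Q, Matrix.mul_apply]
      rfl
    rw [hsum, Dmat]
    rw [inv_pow]
    field_simp [ss2_ne p P Q, pow_ne_zero _ (tt_ne p P)]
  · have h1 : ∀ i : Fin (p+1), iteratedDeriv (k+1) (fun t => t^(i.1+1)) (Q (iy p)) = 0 := by
      intro i
      rw [iterPow, Nat.descFactorial_of_lt (by omega)]
      simp
    rw [iterPow, Nat.descFactorial_of_lt (by have := l.2; omega)]
    simp [h1]

/-- the vector of desired values for the shear parameters -/
def cvec (P Q : Vp p) : Fin (p+1) → ℝ := fun k =>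
  ((iteratedDeriv (k.1+2) (fun y => Real.exp y + Real.exp (2*y)) (P (iy p))
      + ∑ i : Fin (p+1), iteratedDeriv (k.1+2) (fun t => t^(i.1+1)) (P (iy p)) * P (iz p i))
    - ss2 p P Q * (tt p P)^(k.1+2) *
      (iteratedDeriv (k.1+2) Real.exp (Q (iy p))
        + ∑ i : Fin (p+1), iteratedDeriv (k.1+2) (fun t => t^(i.1+1)) (Q (iy p)) * Q (iz p i)))
  / (((k.1:ℝ)+2) * ss2 p P Q * (tt p P)^(k.1+1))

def mu (P Q : Vp p) : Fin (p+1) → ℝ := (Bmat p Q)⁻¹.mulVec (cvec p P Q)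

lemma Bmu (P Q : Vp p) : (Bmat p Q).mulVec (mu p P Q) = cvec p P Q := by
  rw [mu, Matrix.mulVec_mulVec, Matrix.mul_nonsing_inv _ (Bmat_det p Q), Matrix.one_mulVec]

/-- R1: transformation rule for the A coefficient -/
lemma R1' (P Q : Vp p) (k : ℕ) (hk : k ≤ p+2) :
    iteratedDeriv (k+2) (fun y => Real.exp y + Real.exp (2*y)) (P (iy p))
      + ∑ i : Fin (p+1), iteratedDeriv (k+2) (fun t => t^(i.1+1)) (P (iy p)) * P (iz p i)
    = ss2 p P Q * (tt p P)^(k+2) *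
        (iteratedDeriv (k+2) Real.exp (Q (iy p))
          + ∑ i : Fin (p+1), iteratedDeriv (k+2) (fun t => t^(i.1+1)) (Q (iy p)) * Q (iz p i))
      + ((k:ℝ)+2) * ss2 p P Q * (tt p P)^(k+1) *
        ∑ i : Fin (p+1), iteratedDeriv (k+1) (fun t => t^(i.1+1)) (Q (iy p)) * mu p P Q i := by
  by_cases hkp : k ≤ p
  · have hmuv := congrFun (Bmu p P Q) ⟨k, by omega⟩
    simp only [Matrix.mulVec, dotProduct] at hmuv
    have hsum : ∑ i : Fin (p+1), iteratedDeriv (k+1) (fun t => t^(i.1+1)) (Q (iy p)) * mu p P Q i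
        = cvec p P Q ⟨k, by omega⟩ := hmuv
    rw [hsum, cvec]
    have h2 : ((k:ℝ)+2) ≠ 0 := by positivity
    field_simp [ss2_ne p P Q, pow_ne_zero _ (tt_ne p P)]
    ring
  · have h1 : ∀ (m : ℕ) (R : Vp p), k ≤ m →
        ∑ i : Fin (p+1), iteratedDeriv (m+1) (fun t => t^(i.1+1)) (R (iy p)) * R (iz p i) = 0 := by
      intro m R hm
      refine Finset.sum_eq_zero fun i _ => ?_
      rw [iterPow, Nat.descFactorial_of_lt (by have := i.2; omega)]
      simp
    have h2 : ∑ i : Fin (p+1), iteratedDeriv (k+1) (fun t => t^(i.1+1)) (Q (iy p)) * mu p P Q i = 0 := by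
      refine Finset.sum_eq_zero fun i _ => ?_
      rw [iterPow, Nat.descFactorial_of_lt (by have := i.2; omega)]
      simp
    rw [show k+2 = (k+1)+1 from rfl, h1 (k+1) P (by omega), h1 (k+1) Q (by omega), h2, iterExp]
    rw [iterF2]
    beta_reduce
    rcases (by omega : k = p+1 ∨ k = p+2) with h | h <;> subst h
    · rw [show p+1+1+1 = p+3 from by omega]
      rw [← keyA p P Q]
      ring
    · rw [show p+2+1+1 = p+4 from by omega]
      rw [← keyB p P Q]
      ring

/-- Coordinate classification -/
inductive Idx (p : ℕ) where
  | X | Y | Z (i : Fin (p+1)) | XB | YB | ZB (i : Fin (p+1))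

def classify (j : Fin (2*p+6)) : Idx p :=
  if j.1 = 0 then .X
  else if j.1 = 1 then .Y
  else if h : j.1 < p+3 then .Z ⟨j.1 - 2, by omega⟩
  else if j.1 = p+3 then .XB
  else if j.1 = p+4 then .YB
  else .ZB ⟨j.1 - (p+5), by have := j.2; omega⟩

def toIdx : Idx p → Fin (2*p+6)
  | .X => ix p
  | .Y => iy p
  | .Z i => iz p i
  | .XB => ixb p
  | .YB => iyb p
  | .ZB i => izb p i

lemma toIdx_classify (j : Fin (2*p+6)) : toIdx p (classify p j) = j := by
  have hj := j.2
  rw [classify]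
  split_ifs with h0 h1 h2 h3 h4 <;>
    (apply Fin.ext; simp [toIdx, ix, iy, iz, ixb, iyb, izb]) <;> omega

lemma toIdx_inj : Function.Injective (toIdx p) := by
  intro c c' h
  cases c <;> cases c' <;>
    simp only [toIdx, ix, iy, iz, ixb, iyb, izb, Fin.ext_iff, Fin.mk_val] at h ⊢ <;>
    first
      | omega
      | (congr 1; exact Fin.ext (by omega))

lemma classify_toIdx (c : Idx p) : classify p (toIdx p c) = c :=
  toIdx_inj p (toIdx_classify p (toIdx p c))

lemma classify_ix : classify p (ix p) = .X := classify_toIdx p .X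
lemma classify_iy : classify p (iy p) = .Y := classify_toIdx p .Y
lemma classify_iz (i : Fin (p+1)) : classify p (iz p i) = .Z i := classify_toIdx p (.Z i)
lemma classify_ixb : classify p (ixb p) = .XB := classify_toIdx p .XB
lemma classify_iyb : classify p (iyb p) = .YB := classify_toIdx p .YB
lemma classify_izb (i : Fin (p+1)) : classify p (izb p i) = .ZB i := classify_toIdx p (.ZB i)

def lam (P Q : Vp p) : ℝ :=
  (ss2 p P Q * FF p Real.exp Q - FF p (fun y => Real.exp y + Real.exp (2*y)) P) / ss p P Q

def nuv (P Q : Vp p) : Fin (p+1) → ℝ := (Mmat p P Q)⁻¹.mulVec (mu p P Q)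

/-- the linear map, described on classified coordinates -/
def Tapp (P Q : Vp p) (u : Vp p) : Idx p → ℝ
  | .X => ss p P Q * u (ix p)
  | .Y => tt p P * u (iy p)
  | .Z i => (∑ l, Mmat p P Q i l * u (iz p l)) + mu p P Q i * u (iy p)
  | .XB => (ss p P Q)⁻¹ * u (ixb p) + lam p P Q * u (ix p)
  | .YB => (tt p P)⁻¹ * u (iyb p) - (tt p P)⁻¹ * ∑ l, nuv p P Q l * u (izb p l)
  | .ZB i => ∑ l, (Mmat p P Q)⁻¹ l i * u (izb p l)

def Tfun (P Q : Vp p) (u : Vp p) : Vp p := fun j => Tapp p P Q u (classify p j)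

variable (P Q : Vp p)

lemma Tfun_ix (u : Vp p) : Tfun p P Q u (ix p) = ss p P Q * u (ix p) := by
  rw [Tfun, classify_ix]; rfl
lemma Tfun_iy (u : Vp p) : Tfun p P Q u (iy p) = tt p P * u (iy p) := by
  rw [Tfun, classify_iy]; rfl
lemma Tfun_iz (u : Vp p) (i : Fin (p+1)) :
    Tfun p P Q u (iz p i) = (∑ l, Mmat p P Q i l * u (iz p l)) + mu p P Q i * u (iy p) := by
  rw [Tfun, classify_iz]; rfl
lemma Tfun_ixb (u : Vp p) :
    Tfun p P Q u (ixb p) = (ss p P Q)⁻¹ * u (ixb p) + lam p P Q * u (ix p) := by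
  rw [Tfun, classify_ixb]; rfl
lemma Tfun_iyb (u : Vp p) :
    Tfun p P Q u (iyb p)
      = (tt p P)⁻¹ * u (iyb p) - (tt p P)⁻¹ * ∑ l, nuv p P Q l * u (izb p l) := by
  rw [Tfun, classify_iyb]; rfl
lemma Tfun_izb (u : Vp p) (i : Fin (p+1)) :
    Tfun p P Q u (izb p i) = ∑ l, (Mmat p P Q)⁻¹ l i * u (izb p l) := by
  rw [Tfun, classify_izb]; rfl

def Tlin : Vp p →ₗ[ℝ] Vp p where
  toFun := Tfun p P Q
  map_add' u v := by
    funext j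
    show Tapp p P Q (u + v) (classify p j)
      = Tapp p P Q u (classify p j) + Tapp p P Q v (classify p j)
    cases classify p j <;>
      simp [Tapp, Pi.add_apply, mul_add, Finset.sum_add_distrib] <;> ring
  map_smul' c u := by
    funext j
    show Tapp p P Q (c • u) (classify p j) = c * Tapp p P Q u (classify p j)
    cases classify p j <;>
      simp [Tapp, Finset.mul_sum, mul_add, mul_sub, mul_assoc, mul_left_comm]

lemma Tlin_inj : Function.Injective (Tlin p P Q) := by
  rw [← LinearMap.ker_eq_bot, LinearMap.ker_eq_bot']
  intro u hu
  have h : ∀ j, Tfun p P Q u j = 0 := fun j => congrFun hu j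
  have hx : u (ix p) = 0 := by
    have := h (ix p); rw [Tfun_ix] at this
    exact (mul_eq_zero.mp this).resolve_left (ss_ne p P Q)
  have hy : u (iy p) = 0 := by
    have := h (iy p); rw [Tfun_iy] at this
    exact (mul_eq_zero.mp this).resolve_left (tt_ne p P)
  have hz : ∀ i, u (iz p i) = 0 := by
    have h0 : (Mmat p P Q).mulVec (fun l => u (iz p l)) = 0 := by
      funext i
      have := h (iz p i); rw [Tfun_iz, hy, mul_zero, add_zero] at this
      simpa [Matrix.mulVec, dotProduct] using this
    intro i
    have := congrArg (fun w => (Mmat p P Q)⁻¹.mulVec w) h0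
    simp only [Matrix.mulVec_mulVec, Matrix.nonsing_inv_mul _ (Mmat_det p P Q),
      Matrix.one_mulVec, Matrix.mulVec_zero] at this
    exact congrFun this i
  have hzb : ∀ i, u (izb p i) = 0 := by
    have h0 : Matrix.vecMul (fun l => u (izb p l)) (Mmat p P Q)⁻¹ = 0 := by
      funext i
      have := h (izb p i); rw [Tfun_izb] at this
      simpa [Matrix.vecMul, dotProduct, mul_comm] using this
    intro i
    have := congrArg (fun w => Matrix.vecMul w (Mmat p P Q)) h0
    simp only [Matrix.vecMul_vecMul, Matrix.nonsing_inv_mul _ (Mmat_det p P Q),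
      Matrix.vecMul_one, Matrix.zero_vecMul] at this
    exact congrFun this i
  have hxb : u (ixb p) = 0 := by
    have := h (ixb p); rw [Tfun_ixb, hx, mul_zero, add_zero] at this
    exact (mul_eq_zero.mp this).resolve_left (inv_ne_zero (ss_ne p P Q))
  have hyb : u (iyb p) = 0 := by
    have := h (iyb p); rw [Tfun_iyb] at this
    rw [Finset.sum_eq_zero (fun l _ => by rw [hzb l, mul_zero])] at this
    rw [mul_zero, sub_zero] at this
    exact (mul_eq_zero.mp this).resolve_left (inv_ne_zero (tt_ne p P))
  funext j
  rw [show j = toIdx p (classify p j) from (toIdx_classify p j).symm]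
  show u _ = (0 : ℝ)
  cases classify p j
  · exact hx
  · exact hy
  · exact hz _
  · exact hxb
  · exact hyb
  · exact hzb _

def phi : Vp p ≃ₗ[ℝ] Vp p :=
  LinearEquiv.ofBijective (Tlin p P Q)
    ⟨Tlin_inj p P Q, LinearMap.injective_iff_surjective.mp (Tlin_inj p P Q)⟩

lemma phi_apply (u : Vp p) : phi p P Q u = Tfun p P Q u := rfl

lemma sumswap {n m : ℕ} (f : Fin n → ℝ) (g : Fin n → Fin m → ℝ) (h : Fin m → ℝ) :
    ∑ l, (∑ i, f i * g i l) * h l = ∑ i, f i * ∑ l, g i l * h l := by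
  simp only [Finset.sum_mul, Finset.mul_sum, mul_assoc]
  exact Finset.sum_comm

lemma sumhelp1 {n : ℕ} (M : Matrix (Fin n) (Fin n) ℝ) (hM : IsUnit M.det)
    (w w' : Fin n → ℝ) :
    ∑ i, (∑ l, M i l * w l) * (∑ j, M⁻¹ j i * w' j) = ∑ l, w l * w' l := by
  have e1 : ∀ i, (∑ l, M i l * w l) = M.mulVec w i := by
    intro i; simp [Matrix.mulVec, dotProduct]
  have e2 : ∀ i, (∑ j, M⁻¹ j i * w' j) = Matrix.vecMul w' M⁻¹ i := by
    intro i; simp [Matrix.vecMul, dotProduct, mul_comm]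
  calc ∑ i, (∑ l, M i l * w l) * (∑ j, M⁻¹ j i * w' j)
      = ∑ i, Matrix.vecMul w' M⁻¹ i * M.mulVec w i := by
        exact Finset.sum_congr rfl fun i _ => by rw [e1, e2]; ring
    _ = dotProduct (Matrix.vecMul w' M⁻¹) (M.mulVec w) := rfl
    _ = dotProduct (Matrix.vecMul (Matrix.vecMul w' M⁻¹) M) w := by
        rw [dotProduct_mulVec]
    _ = dotProduct w' w := by
        rw [Matrix.vecMul_vecMul, Matrix.nonsing_inv_mul _ hM, Matrix.vecMul_one]
    _ = ∑ l, w l * w' l := by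
        simp [dotProduct, mul_comm]

lemma sumhelp2 {n : ℕ} (M : Matrix (Fin n) (Fin n) ℝ) (v w : Fin n → ℝ) :
    ∑ i, v i * (∑ j, M⁻¹ j i * w j) = ∑ j, M⁻¹.mulVec v j * w j := by
  have e2 : ∀ i, (∑ j, M⁻¹ j i * w j) = Matrix.vecMul w M⁻¹ i := by
    intro i; simp [Matrix.vecMul, dotProduct, mul_comm]
  calc ∑ i, v i * (∑ j, M⁻¹ j i * w j)
      = dotProduct v (Matrix.vecMul w M⁻¹) := by
        exact Finset.sum_congr rfl fun i _ => by rw [e2]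
    _ = dotProduct (Matrix.vecMul w M⁻¹) v := dotProduct_comm _ _
    _ = dotProduct w (M⁻¹.mulVec v) := by
        rw [← dotProduct_mulVec]
    _ = ∑ j, M⁻¹.mulVec v j * w j := by
        simp [dotProduct, mul_comm]

theorem gp_eq (u v : Vp p) :
    gP p Real.exp Q (Tfun p P Q u) (Tfun p P Q v)
      = gP p (fun y => Real.exp y + Real.exp (2*y)) P u v := by
  have hz :
      ∑ i : Fin (p+1), (Tfun p P Q u (iz p i) * Tfun p P Q v (izb p i)
          + Tfun p P Q u (izb p i) * Tfun p P Q v (iz p i))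
      = (∑ i : Fin (p+1), (u (iz p i) * v (izb p i) + u (izb p i) * v (iz p i)))
        + u (iy p) * (∑ l, nuv p P Q l * v (izb p l))
        + v (iy p) * (∑ l, nuv p P Q l * u (izb p l)) := by
    simp only [Tfun_iz, Tfun_izb]
    have step1 :
        ∑ i : Fin (p+1),
          (((∑ l, Mmat p P Q i l * u (iz p l)) + mu p P Q i * u (iy p))
              * (∑ l, (Mmat p P Q)⁻¹ l i * v (izb p l))
            + (∑ l, (Mmat p P Q)⁻¹ l i * u (izb p l))
              * ((∑ l, Mmat p P Q i l * v (iz p l)) + mu p P Q i * v (iy p)))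
        = (∑ i : Fin (p+1), (∑ l, Mmat p P Q i l * u (iz p l)) * (∑ l, (Mmat p P Q)⁻¹ l i * v (izb p l)))
          + u (iy p) * ∑ i : Fin (p+1), mu p P Q i * (∑ l, (Mmat p P Q)⁻¹ l i * v (izb p l))
          + ((∑ i : Fin (p+1), (∑ l, Mmat p P Q i l * v (iz p l)) * (∑ l, (Mmat p P Q)⁻¹ l i * u (izb p l)))
            + v (iy p) * ∑ i : Fin (p+1), mu p P Q i * (∑ l, (Mmat p P Q)⁻¹ l i * u (izb p l))) := by
      rw [Finset.mul_sum, Finset.mul_sum, ← Finset.sum_add_distrib,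
        ← Finset.sum_add_distrib, ← Finset.sum_add_distrib]
      exact Finset.sum_congr rfl fun i _ => by ring
    rw [step1, sumhelp1 _ (Mmat_det p P Q), sumhelp1 _ (Mmat_det p P Q),
      sumhelp2, sumhelp2]
    simp only [nuv]
    rw [show (∑ i : Fin (p+1), (u (iz p i) * v (izb p i) + u (izb p i) * v (iz p i)))
        = (∑ l : Fin (p+1), u (iz p l) * v (izb p l))
          + ∑ l : Fin (p+1), v (iz p l) * u (izb p l) from by
      rw [← Finset.sum_add_distrib]; exact Finset.sum_congr rfl fun i _ => by ring]
    ring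
  rw [gP, gP, Tfun_ix, Tfun_ix, Tfun_iy, Tfun_iy, Tfun_ixb, Tfun_ixb,
    Tfun_iyb, Tfun_iyb, hz]
  simp only [lam]
  rw [show ss2 p P Q = ss p P Q * ss p P Q from (ss_sq p P Q).symm]
  field_simp [ss_ne p P Q, tt_ne p P]
  ring

lemma sum_factor {n : ℕ} (c : ℝ) (f : Fin n → ℝ) : ∑ i, c * f i = c * ∑ i, f i :=
  (Finset.mul_sum _ _ _).symm

lemma w1 (u v : Vp p) : wdg p (ix p) (iy p) (Tfun p P Q u) (Tfun p P Q v)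
    = ss p P Q * tt p P * wdg p (ix p) (iy p) u v := by
  rw [wdg, wdg, Tfun_ix, Tfun_ix, Tfun_iy, Tfun_iy]; ring

lemma w2 (i : Fin (p+1)) (u v : Vp p) :
    wdg p (ix p) (iz p i) (Tfun p P Q u) (Tfun p P Q v)
      = ss p P Q * ((∑ l, Mmat p P Q i l * wdg p (ix p) (iz p l) u v)
          + mu p P Q i * wdg p (ix p) (iy p) u v) := by
  simp only [wdg, Tfun_ix p P Q, Tfun_iz p P Q, Tfun_iy p P Q]
  rw [show (∑ l, Mmat p P Q i l * (u (ix p) * v (iz p l) - u (iz p l) * v (ix p)))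
      = u (ix p) * (∑ l, Mmat p P Q i l * v (iz p l))
        - v (ix p) * (∑ l, Mmat p P Q i l * u (iz p l)) from by
    rw [Finset.mul_sum, Finset.mul_sum, ← Finset.sum_sub_distrib]
    exact Finset.sum_congr rfl fun l _ => by ring]
  ring

theorem nr_eq (k : ℕ) (hk : k ≤ p+2) (ξ₁ ξ₂ ξ₃ ξ₄ : Vp p) (η : Fin k → Vp p) :
    nR p Real.exp k Q (Tfun p P Q ξ₁) (Tfun p P Q ξ₂) (Tfun p P Q ξ₃) (Tfun p P Q ξ₄)
        (fun l => Tfun p P Q (η l))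
      = nR p (fun y => Real.exp y + Real.exp (2*y)) k P ξ₁ ξ₂ ξ₃ ξ₄ η := by
  have hPi : ∏ j : Fin k, (tt p P * η j (iy p))
      = tt p P ^ k * ∏ j : Fin k, η j (iy p) := by
    rw [Finset.prod_mul_distrib, Finset.prod_const, Finset.card_univ, Fintype.card_fin]
  have hS : ∀ i : Fin (p+1),
      (∑ j : Fin k, ((∑ l, Mmat p P Q i l * η j (iz p l)) + mu p P Q i * η j (iy p))
          * ∏ l ∈ Finset.univ.erase j, (tt p P * η l (iy p)))
      = tt p P ^ (k-1) *
          ((∑ l, Mmat p P Q i l *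
              (∑ j : Fin k, η j (iz p l) * ∏ m ∈ Finset.univ.erase j, η m (iy p)))
            + (k:ℝ) * mu p P Q i * ∏ j : Fin k, η j (iy p)) := by
    intro i
    have hC : ∀ j : Fin k, ∏ l ∈ Finset.univ.erase j, (tt p P * η l (iy p))
        = tt p P ^ (k-1) * ∏ l ∈ Finset.univ.erase j, η l (iy p) := by
      intro j
      rw [Finset.prod_mul_distrib, Finset.prod_const,
        Finset.card_erase_of_mem (Finset.mem_univ j), Finset.card_univ, Fintype.card_fin]
    calc ∑ j : Fin k, ((∑ l, Mmat p P Q i l * η j (iz p l)) + mu p P Q i * η j (iy p))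
            * ∏ l ∈ Finset.univ.erase j, (tt p P * η l (iy p))
        = ∑ j : Fin k, tt p P ^ (k-1) *
            ((∑ l, Mmat p P Q i l * η j (iz p l)) * ∏ m ∈ Finset.univ.erase j, η m (iy p)
              + mu p P Q i * (η j (iy p) * ∏ m ∈ Finset.univ.erase j, η m (iy p))) := by
          refine Finset.sum_congr rfl fun j _ => ?_
          rw [hC j]; ring
      _ = tt p P ^ (k-1) *
            ((∑ j : Fin k, (∑ l, Mmat p P Q i l * η j (iz p l))
                * ∏ m ∈ Finset.univ.erase j, η m (iy p))
              + mu p P Q i * ∑ j : Fin k, η j (iy p) * ∏ m ∈ Finset.univ.erase j, η m (iy p)) := by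
          rw [sum_factor]
          congr 1
          rw [Finset.sum_add_distrib]
          congr 1
          rw [sum_factor]
      _ = tt p P ^ (k-1) *
            ((∑ l, Mmat p P Q i l *
                (∑ j : Fin k, η j (iz p l) * ∏ m ∈ Finset.univ.erase j, η m (iy p)))
              + (k:ℝ) * mu p P Q i * ∏ j : Fin k, η j (iy p)) := by
          congr 1
          rw [sumswap]
          congr 1
          rw [show (∑ j : Fin k, η j (iy p) * ∏ m ∈ Finset.univ.erase j, η m (iy p))
              = ∑ _j : Fin k, ∏ m, η m (iy p) from
            Finset.sum_congr rfl fun j _ =>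
              Finset.mul_prod_erase Finset.univ (fun m => η m (iy p)) (Finset.mem_univ j)]
          rw [Finset.sum_const, Finset.card_univ, Fintype.card_fin, nsmul_eq_mul]
          ring
  rw [nR, nR]
  simp only [w1 p P Q, w2 p P Q, Tfun_iy p P Q, Tfun_iz p P Q]
  rw [hPi]
  simp only [hS]
  rw [R1' p P Q k hk]
  have hBP : ∀ l : Fin (p+1), iteratedDeriv (k+1) (fun t => t^(l.1+1)) (P (iy p))
      = ss2 p P Q * (tt p P)^(k+1) *
        ∑ i, iteratedDeriv (k+1) (fun t => t^(i.1+1)) (Q (iy p)) * Mmat p P Q i l :=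
    fun l => R2' p P Q k hk l
  simp only [hBP]
  -- reorganize the sums on both sides
  have hL1 : ∑ i : Fin (p+1), iteratedDeriv (k+1) (fun t => t^(i.1+1)) (Q (iy p)) *
        (tt p P ^ (k-1) *
          ((∑ l, Mmat p P Q i l *
              (∑ j : Fin k, η j (iz p l) * ∏ m ∈ Finset.univ.erase j, η m (iy p)))
            + (k:ℝ) * mu p P Q i * ∏ j : Fin k, η j (iy p)))
      = tt p P ^ (k-1) *
          ((∑ i : Fin (p+1), iteratedDeriv (k+1) (fun t => t^(i.1+1)) (Q (iy p)) *
              (∑ l, Mmat p P Q i l *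
                (∑ j : Fin k, η j (iz p l) * ∏ m ∈ Finset.univ.erase j, η m (iy p))))
            + (k:ℝ) * (∑ i : Fin (p+1), iteratedDeriv (k+1) (fun t => t^(i.1+1)) (Q (iy p))
                * mu p P Q i) * ∏ j : Fin k, η j (iy p)) := by
    set BQ : Fin (p+1) → ℝ := fun i => iteratedDeriv (k+1) (fun t => t^(i.1+1)) (Q (iy p))
      with hBQdef
    set Pi := ∏ j : Fin k, η j (iy p) with hPidef
    calc ∑ i : Fin (p+1), BQ i *
            (tt p P ^ (k-1) *
              ((∑ l, Mmat p P Q i l *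
                  (∑ j : Fin k, η j (iz p l) * ∏ m ∈ Finset.univ.erase j, η m (iy p)))
                + (k:ℝ) * mu p P Q i * Pi))
        = ∑ i : Fin (p+1), tt p P ^ (k-1) *
            (BQ i * (∑ l, Mmat p P Q i l *
                (∑ j : Fin k, η j (iz p l) * ∏ m ∈ Finset.univ.erase j, η m (iy p)))
              + (BQ i * mu p P Q i) * ((k:ℝ) * Pi)) := by
          exact Finset.sum_congr rfl fun i _ => by ring
      _ = tt p P ^ (k-1) *
            ((∑ i : Fin (p+1), BQ i * (∑ l, Mmat p P Q i l *
                (∑ j : Fin k, η j (iz p l) * ∏ m ∈ Finset.univ.erase j, η m (iy p))))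
              + (∑ i : Fin (p+1), BQ i * mu p P Q i) * ((k:ℝ) * Pi)) := by
          rw [sum_factor]
          congr 1
          rw [Finset.sum_add_distrib, ← Finset.sum_mul]
      _ = tt p P ^ (k-1) *
            ((∑ i : Fin (p+1), BQ i * (∑ l, Mmat p P Q i l *
                (∑ j : Fin k, η j (iz p l) * ∏ m ∈ Finset.univ.erase j, η m (iy p))))
              + (k:ℝ) * (∑ i : Fin (p+1), BQ i * mu p P Q i) * Pi) := by ring
  have hL2 : ∑ x : Fin (p+1), iteratedDeriv (k+1) (fun t => t^(x.1+1)) (Q (iy p)) *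
        (ss p P Q * tt p P * wdg p (ix p) (iy p) ξ₁ ξ₂ *
            (ss p P Q *
              (∑ l, Mmat p P Q x l * wdg p (ix p) (iz p l) ξ₃ ξ₄ +
                mu p P Q x * wdg p (ix p) (iy p) ξ₃ ξ₄)) +
          ss p P Q *
              (∑ l, Mmat p P Q x l * wdg p (ix p) (iz p l) ξ₁ ξ₂ +
                mu p P Q x * wdg p (ix p) (iy p) ξ₁ ξ₂) *
            (ss p P Q * tt p P * wdg p (ix p) (iy p) ξ₃ ξ₄))
      = ss p P Q * ss p P Q * tt p P *
          (wdg p (ix p) (iy p) ξ₁ ξ₂ *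
              (∑ x : Fin (p+1), iteratedDeriv (k+1) (fun t => t^(x.1+1)) (Q (iy p)) *
                (∑ l, Mmat p P Q x l * wdg p (ix p) (iz p l) ξ₃ ξ₄))
            + (∑ x : Fin (p+1), iteratedDeriv (k+1) (fun t => t^(x.1+1)) (Q (iy p)) *
                (∑ l, Mmat p P Q x l * wdg p (ix p) (iz p l) ξ₁ ξ₂))
              * wdg p (ix p) (iy p) ξ₃ ξ₄
            + 2 * (∑ x : Fin (p+1), iteratedDeriv (k+1) (fun t => t^(x.1+1)) (Q (iy p)) *
                mu p P Q x)
              * (wdg p (ix p) (iy p) ξ₁ ξ₂ * wdg p (ix p) (iy p) ξ₃ ξ₄)) := by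
    calc ∑ x : Fin (p+1), iteratedDeriv (k+1) (fun t => t^(x.1+1)) (Q (iy p)) *
            (ss p P Q * tt p P * wdg p (ix p) (iy p) ξ₁ ξ₂ *
                (ss p P Q * (∑ l, Mmat p P Q x l * wdg p (ix p) (iz p l) ξ₃ ξ₄ +
                    mu p P Q x * wdg p (ix p) (iy p) ξ₃ ξ₄)) +
              ss p P Q * (∑ l, Mmat p P Q x l * wdg p (ix p) (iz p l) ξ₁ ξ₂ +
                    mu p P Q x * wdg p (ix p) (iy p) ξ₁ ξ₂) *
                (ss p P Q * tt p P * wdg p (ix p) (iy p) ξ₃ ξ₄))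
        = ∑ x : Fin (p+1), (ss p P Q * ss p P Q * tt p P) *
            (wdg p (ix p) (iy p) ξ₁ ξ₂ * (iteratedDeriv (k+1) (fun t => t^(x.1+1)) (Q (iy p)) * (∑ l, Mmat p P Q x l * wdg p (ix p) (iz p l) ξ₃ ξ₄))
              + (iteratedDeriv (k+1) (fun t => t^(x.1+1)) (Q (iy p)) * (∑ l, Mmat p P Q x l * wdg p (ix p) (iz p l) ξ₁ ξ₂)) * wdg p (ix p) (iy p) ξ₃ ξ₄
              + (iteratedDeriv (k+1) (fun t => t^(x.1+1)) (Q (iy p)) * mu p P Q x) * (2 * (wdg p (ix p) (iy p) ξ₁ ξ₂ * wdg p (ix p) (iy p) ξ₃ ξ₄))) := by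
          exact Finset.sum_congr rfl fun x _ => by ring
      _ = (ss p P Q * ss p P Q * tt p P) * ∑ x : Fin (p+1),
            (wdg p (ix p) (iy p) ξ₁ ξ₂ * (iteratedDeriv (k+1) (fun t => t^(x.1+1)) (Q (iy p)) * (∑ l, Mmat p P Q x l * wdg p (ix p) (iz p l) ξ₃ ξ₄))
              + (iteratedDeriv (k+1) (fun t => t^(x.1+1)) (Q (iy p)) * (∑ l, Mmat p P Q x l * wdg p (ix p) (iz p l) ξ₁ ξ₂)) * wdg p (ix p) (iy p) ξ₃ ξ₄
              + (iteratedDeriv (k+1) (fun t => t^(x.1+1)) (Q (iy p)) * mu p P Q x) * (2 * (wdg p (ix p) (iy p) ξ₁ ξ₂ * wdg p (ix p) (iy p) ξ₃ ξ₄))) := sum_factor _ _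
      _ = (ss p P Q * ss p P Q * tt p P) *
            ((∑ x : Fin (p+1), wdg p (ix p) (iy p) ξ₁ ξ₂ * (iteratedDeriv (k+1) (fun t => t^(x.1+1)) (Q (iy p)) * (∑ l, Mmat p P Q x l * wdg p (ix p) (iz p l) ξ₃ ξ₄)))
              + (∑ x : Fin (p+1), (iteratedDeriv (k+1) (fun t => t^(x.1+1)) (Q (iy p)) * (∑ l, Mmat p P Q x l * wdg p (ix p) (iz p l) ξ₁ ξ₂)) * wdg p (ix p) (iy p) ξ₃ ξ₄)
              + (∑ x : Fin (p+1), (iteratedDeriv (k+1) (fun t => t^(x.1+1)) (Q (iy p)) * mu p P Q x) * (2 * (wdg p (ix p) (iy p) ξ₁ ξ₂ * wdg p (ix p) (iy p) ξ₃ ξ₄)))) := by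
          rw [Finset.sum_add_distrib, Finset.sum_add_distrib]
      _ = (ss p P Q * ss p P Q * tt p P) *
            (wdg p (ix p) (iy p) ξ₁ ξ₂ * (∑ x : Fin (p+1), iteratedDeriv (k+1) (fun t => t^(x.1+1)) (Q (iy p)) * (∑ l, Mmat p P Q x l * wdg p (ix p) (iz p l) ξ₃ ξ₄))
              + (∑ x : Fin (p+1), iteratedDeriv (k+1) (fun t => t^(x.1+1)) (Q (iy p)) * (∑ l, Mmat p P Q x l * wdg p (ix p) (iz p l) ξ₁ ξ₂)) * wdg p (ix p) (iy p) ξ₃ ξ₄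
              + (∑ x : Fin (p+1), iteratedDeriv (k+1) (fun t => t^(x.1+1)) (Q (iy p)) * mu p P Q x) * (2 * (wdg p (ix p) (iy p) ξ₁ ξ₂ * wdg p (ix p) (iy p) ξ₃ ξ₄))) := by
          rw [sum_factor, ← Finset.sum_mul, ← Finset.sum_mul]
      _ = _ := by ring
  have hR1 : ∑ x : Fin (p+1),
        (ss2 p P Q * tt p P ^ (k+1) *
          ∑ i : Fin (p+1), iteratedDeriv (k+1) (fun t => t^(i.1+1)) (Q (iy p)) * Mmat p P Q i x) *
          (∑ j : Fin k, η j (iz p x) * ∏ m ∈ Finset.univ.erase j, η m (iy p))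
      = ss2 p P Q * tt p P ^ (k+1) *
          ∑ i : Fin (p+1), iteratedDeriv (k+1) (fun t => t^(i.1+1)) (Q (iy p)) *
            (∑ l, Mmat p P Q i l *
              (∑ j : Fin k, η j (iz p l) * ∏ m ∈ Finset.univ.erase j, η m (iy p))) := by
    calc ∑ x : Fin (p+1),
          (ss2 p P Q * tt p P ^ (k+1) *
            ∑ i : Fin (p+1), iteratedDeriv (k+1) (fun t => t^(i.1+1)) (Q (iy p)) * Mmat p P Q i x) *
            (∑ j : Fin k, η j (iz p x) * ∏ m ∈ Finset.univ.erase j, η m (iy p))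
        = ss2 p P Q * tt p P ^ (k+1) *
            ∑ x : Fin (p+1),
              (∑ i : Fin (p+1), iteratedDeriv (k+1) (fun t => t^(i.1+1)) (Q (iy p)) * Mmat p P Q i x) *
              (∑ j : Fin k, η j (iz p x) * ∏ m ∈ Finset.univ.erase j, η m (iy p)) := by
          rw [Finset.mul_sum]
          exact Finset.sum_congr rfl fun x _ => by ring
      _ = _ := by
          congr 1
          exact sumswap _ _ _
  have hR2 : ∑ x : Fin (p+1),
        (ss2 p P Q * tt p P ^ (k+1) *
          ∑ i : Fin (p+1), iteratedDeriv (k+1) (fun t => t^(i.1+1)) (Q (iy p)) * Mmat p P Q i x) *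
          (wdg p (ix p) (iy p) ξ₁ ξ₂ * wdg p (ix p) (iz p x) ξ₃ ξ₄ +
            wdg p (ix p) (iz p x) ξ₁ ξ₂ * wdg p (ix p) (iy p) ξ₃ ξ₄)
      = ss2 p P Q * tt p P ^ (k+1) *
          (wdg p (ix p) (iy p) ξ₁ ξ₂ *
              (∑ i : Fin (p+1), iteratedDeriv (k+1) (fun t => t^(i.1+1)) (Q (iy p)) *
                (∑ l, Mmat p P Q i l * wdg p (ix p) (iz p l) ξ₃ ξ₄))
            + (∑ i : Fin (p+1), iteratedDeriv (k+1) (fun t => t^(i.1+1)) (Q (iy p)) *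
                (∑ l, Mmat p P Q i l * wdg p (ix p) (iz p l) ξ₁ ξ₂))
              * wdg p (ix p) (iy p) ξ₃ ξ₄) := by
    calc ∑ x : Fin (p+1),
          (ss2 p P Q * tt p P ^ (k+1) *
            ∑ i : Fin (p+1), iteratedDeriv (k+1) (fun t => t^(i.1+1)) (Q (iy p)) * Mmat p P Q i x) *
            (wdg p (ix p) (iy p) ξ₁ ξ₂ * wdg p (ix p) (iz p x) ξ₃ ξ₄ +
              wdg p (ix p) (iz p x) ξ₁ ξ₂ * wdg p (ix p) (iy p) ξ₃ ξ₄)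
        = ss2 p P Q * tt p P ^ (k+1) *
            ∑ x : Fin (p+1),
              ((∑ i : Fin (p+1), iteratedDeriv (k+1) (fun t => t^(i.1+1)) (Q (iy p)) * Mmat p P Q i x)
                  * (wdg p (ix p) (iy p) ξ₁ ξ₂ * wdg p (ix p) (iz p x) ξ₃ ξ₄)
                + (∑ i : Fin (p+1), iteratedDeriv (k+1) (fun t => t^(i.1+1)) (Q (iy p)) * Mmat p P Q i x)
                  * (wdg p (ix p) (iz p x) ξ₁ ξ₂ * wdg p (ix p) (iy p) ξ₃ ξ₄)) := by
          rw [Finset.mul_sum]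
          exact Finset.sum_congr rfl fun x _ => by ring
      _ = ss2 p P Q * tt p P ^ (k+1) *
            (wdg p (ix p) (iy p) ξ₁ ξ₂ *
              (∑ x : Fin (p+1),
                (∑ i : Fin (p+1), iteratedDeriv (k+1) (fun t => t^(i.1+1)) (Q (iy p)) * Mmat p P Q i x)
                  * wdg p (ix p) (iz p x) ξ₃ ξ₄)
              + (∑ x : Fin (p+1),
                  (∑ i : Fin (p+1), iteratedDeriv (k+1) (fun t => t^(i.1+1)) (Q (iy p)) * Mmat p P Q i x)
                    * wdg p (ix p) (iz p x) ξ₁ ξ₂)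
                * wdg p (ix p) (iy p) ξ₃ ξ₄) := by
          congr 1
          rw [Finset.sum_add_distrib]
          congr 1
          · rw [Finset.mul_sum]
            exact Finset.sum_congr rfl fun x _ => by ring
          · rw [Finset.sum_mul]
            exact Finset.sum_congr rfl fun x _ => by ring
      _ = _ := by
          rw [sumswap (g := fun i l => Mmat p P Q i l), sumswap (g := fun i l => Mmat p P Q i l)]
  rw [hL1, hL2, hR1, hR2]
  rw [show ss2 p P Q = ss p P Q * ss p P Q from (ss_sq p P Q).symm]
  rcases k with _ | n
  · simp only [Finset.univ_eq_empty, Finset.sum_empty, Finset.prod_empty, mul_zero,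
      Finset.sum_const_zero, Nat.cast_zero, zero_mul, mul_one, add_zero, zero_add, pow_zero]
    ring
  · rw [show n + 1 - 1 = n from rfl]
    push_cast
    ring


end

end GN

/-- M²_{2p+6} = M_{2p+6, e^y+e^{2y}} is (p+2)-modeled on
M¹_{2p+6} = M_{2p+6, e^y}: for all points P, Q there is a linear isomorphism φ of ℝ^m
with g^{(1)}_Q(φu,φv) = g^{(2)}_P(u,v) and
∇^kR^{(1)}_Q(φξ₁,…,φξ_{4+k}) = ∇^kR^{(2)}_P(ξ₁,…,ξ_{4+k}) for all 0 ≤ k ≤ p+2,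
where the superscripts (1), (2) refer to f₁(y) = e^y and f₂(y) = e^y + e^{2y}. -/
theorem M2_is_p_plus_two_modeled_on_M1 (p : ℕ) (P Q : Vp p) :
    ∃ φ : Vp p ≃ₗ[ℝ] Vp p,
      (∀ u v : Vp p, gP p Real.exp Q (φ u) (φ v)
        = gP p (fun y => Real.exp y + Real.exp (2*y)) P u v) ∧
      (∀ k : ℕ, k ≤ p+2 → ∀ (ξ₁ ξ₂ ξ₃ ξ₄ : Vp p) (η : Fin k → Vp p),
        nR p Real.exp k Q (φ ξ₁) (φ ξ₂) (φ ξ₃) (φ ξ₄) (fun l => φ (η l))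
          = nR p (fun y => Real.exp y + Real.exp (2*y)) k P ξ₁ ξ₂ ξ₃ ξ₄ η) := by
  refine ⟨GN.phi p P Q, fun u v => ?_, fun k hk ξ₁ ξ₂ ξ₃ ξ₄ η => ?_⟩
  · exact GN.gp_eq p P Q u v
  · exact GN.nr_eq p P Q k hk ξ₁ ξ₂ ξ₃ ξ₄ η
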